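/- For generic A, Z₁,…,Z₅ ∈ ℝ⁴ (all brackets below nonzero), the sum of the three residue terms ⟨5123⟩⟨4512⟩⟨1234⟩/(⟨A145⟩⟨A512⟩⟨A123⟩⟨A234⟩) − ⟨5124⟩²⟨2345⟩/(⟨A145⟩⟨A512⟩⟨A234⟩⟨A245⟩) + ⟨1234⟩²⟨1345⟩/(⟨A134⟩⟨A145⟩⟨A123⟩⟨A234⟩) equals the canonical form of the cyclic polytope with vertices Z₂, Z₃, Z₄, Z₅, −Z₁, namely the sum [2,3,4,−1] + [2,4,5,−1], where [a,b,c,d] := ⟨abcd⟩³/(⟨Aabc⟩⟨Abcd⟩⟨Acda⟩⟨Adab⟩) and −1 denotes the vector −Z₁. -/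

import Mathlib

noncomputable def det4 (x y z w : Fin 4 → ℝ) : ℝ := Matrix.det (Matrix.of ![x, y, z, w])

noncomputable def tet (A a b c d : Fin 4 → ℝ) : ℝ :=
  (det4 a b c d)^3 / (det4 A a b c * det4 A b c d * det4 A c d a * det4 A d a b)

lemma det4_expand (x y z w : Fin 4 → ℝ) : det4 x y z w =
    x 0*(y 1*(z 2*w 3 - z 3*w 2) - y 2*(z 1*w 3 - z 3*w 1) + y 3*(z 1*w 2 - z 2*w 1))
  - x 1*(y 0*(z 2*w 3 - z 3*w 2) - y 2*(z 0*w 3 - z 3*w 0) + y 3*(z 0*w 2 - z 2*w 0))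
  + x 2*(y 0*(z 1*w 3 - z 3*w 1) - y 1*(z 0*w 3 - z 3*w 0) + y 3*(z 0*w 1 - z 1*w 0))
  - x 3*(y 0*(z 1*w 2 - z 2*w 1) - y 1*(z 0*w 2 - z 2*w 0) + y 2*(z 0*w 1 - z 1*w 0)) := by
  have e1 : (Fin.succ 2 : Fin 4) = 3 := rfl
  have e2 : (Fin.castSucc 2 : Fin 4) = 2 := rfl
  simp only [det4, Matrix.det_succ_row_zero, Matrix.det_fin_three, Fin.sum_univ_succ,
    Matrix.submatrix_apply, Fin.succAbove, Fin.lt_def, Matrix.of_apply, Matrix.cons_val',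
    Matrix.cons_val_zero, Matrix.cons_val_one, Matrix.head_cons, Matrix.cons_val_fin_one,
    Matrix.empty_val', Matrix.head_fin_const, Matrix.cons_val_two, Matrix.tail_cons,
    Matrix.cons_val_three, Fin.isValue, e1, e2]
  norm_num [e1, e2, show ((3:Fin 4):ℕ)=3 from rfl]
  simp only [Matrix.cons_val]
  ring

theorem five_point_cyclic_polytope_triangulation (A Z₁ Z₂ Z₃ Z₄ Z₅ : Fin 4 → ℝ)
    (h1 : det4 A Z₁ Z₄ Z₅ ≠ 0) (h2 : det4 A Z₅ Z₁ Z₂ ≠ 0) (h3 : det4 A Z₁ Z₂ Z₃ ≠ 0)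
    (h4 : det4 A Z₂ Z₃ Z₄ ≠ 0) (h5 : det4 A Z₂ Z₄ Z₅ ≠ 0) (h6 : det4 A Z₁ Z₃ Z₄ ≠ 0)
    (h7 : det4 A Z₃ Z₄ (-Z₁) ≠ 0) (h8 : det4 A Z₄ (-Z₁) Z₂ ≠ 0)
    (h9 : det4 A Z₄ Z₅ (-Z₁) ≠ 0) (h10 : det4 A Z₅ (-Z₁) Z₂ ≠ 0)
    (h11 : det4 A Z₂ Z₃ (-Z₁) ≠ 0) (h12 : det4 A Z₂ Z₄ (-Z₁) ≠ 0) :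
    det4 Z₅ Z₁ Z₂ Z₃ * det4 Z₄ Z₅ Z₁ Z₂ * det4 Z₁ Z₂ Z₃ Z₄ /
        (det4 A Z₁ Z₄ Z₅ * det4 A Z₅ Z₁ Z₂ * det4 A Z₁ Z₂ Z₃ * det4 A Z₂ Z₃ Z₄)
    - (det4 Z₅ Z₁ Z₂ Z₄)^2 * det4 Z₂ Z₃ Z₄ Z₅ /
        (det4 A Z₁ Z₄ Z₅ * det4 A Z₅ Z₁ Z₂ * det4 A Z₂ Z₃ Z₄ * det4 A Z₂ Z₄ Z₅)
    + (det4 Z₁ Z₂ Z₃ Z₄)^2 * det4 Z₁ Z₃ Z₄ Z₅ /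
        (det4 A Z₁ Z₃ Z₄ * det4 A Z₁ Z₄ Z₅ * det4 A Z₁ Z₂ Z₃ * det4 A Z₂ Z₃ Z₄)
    = tet A Z₂ Z₃ Z₄ (-Z₁) + tet A Z₂ Z₄ Z₅ (-Z₁) := by
  have L12 : det4 A Z₁ Z₂ Z₃ * det4 Z₁ Z₂ Z₄ Z₅ - det4 A Z₁ Z₂ Z₄ * det4 Z₁ Z₂ Z₃ Z₅
      + det4 A Z₁ Z₂ Z₅ * det4 Z₁ Z₂ Z₃ Z₄ = 0 := by simp only [det4_expand]; ring
  have L14 : det4 A Z₁ Z₄ Z₅ * det4 Z₁ Z₂ Z₃ Z₄ - det4 A Z₁ Z₃ Z₄ * det4 Z₁ Z₂ Z₄ Z₅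
      + det4 A Z₁ Z₂ Z₄ * det4 Z₁ Z₃ Z₄ Z₅ = 0 := by simp only [det4_expand]; ring
  have L24 : -(det4 A Z₂ Z₄ Z₅ * det4 Z₁ Z₂ Z₃ Z₄) + det4 A Z₂ Z₃ Z₄ * det4 Z₁ Z₂ Z₄ Z₅
      - det4 A Z₁ Z₂ Z₄ * det4 Z₂ Z₃ Z₄ Z₅ = 0 := by simp only [det4_expand]; ring
  have p1 : det4 Z₅ Z₁ Z₂ Z₃ = -det4 Z₁ Z₂ Z₃ Z₅ := by simp only [det4_expand]; ring
  have p2 : det4 Z₄ Z₅ Z₁ Z₂ = det4 Z₁ Z₂ Z₄ Z₅ := by simp only [det4_expand]; ring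
  have p3 : det4 Z₅ Z₁ Z₂ Z₄ = -det4 Z₁ Z₂ Z₄ Z₅ := by simp only [det4_expand]; ring
  have p4 : det4 A Z₅ Z₁ Z₂ = det4 A Z₁ Z₂ Z₅ := by simp only [det4_expand]; ring
  have p5 : det4 Z₂ Z₃ Z₄ (-Z₁) = det4 Z₁ Z₂ Z₃ Z₄ := by
    simp only [det4_expand, Pi.neg_apply]; ring
  have p6 : det4 A Z₃ Z₄ (-Z₁) = -det4 A Z₁ Z₃ Z₄ := by
    simp only [det4_expand, Pi.neg_apply]; ring
  have p7 : det4 A Z₄ (-Z₁) Z₂ = -det4 A Z₁ Z₂ Z₄ := by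
    simp only [det4_expand, Pi.neg_apply]; ring
  have p8 : det4 A (-Z₁) Z₂ Z₃ = -det4 A Z₁ Z₂ Z₃ := by
    simp only [det4_expand, Pi.neg_apply]; ring
  have p9 : det4 Z₂ Z₄ Z₅ (-Z₁) = det4 Z₁ Z₂ Z₄ Z₅ := by
    simp only [det4_expand, Pi.neg_apply]; ring
  have p10 : det4 A Z₄ Z₅ (-Z₁) = -det4 A Z₁ Z₄ Z₅ := by
    simp only [det4_expand, Pi.neg_apply]; ring
  have p11 : det4 A Z₅ (-Z₁) Z₂ = -det4 A Z₁ Z₂ Z₅ := by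
    simp only [det4_expand, Pi.neg_apply]; ring
  have p12 : det4 A (-Z₁) Z₂ Z₄ = -det4 A Z₁ Z₂ Z₄ := by
    simp only [det4_expand, Pi.neg_apply]; ring
  have n124 : det4 A Z₁ Z₂ Z₄ ≠ 0 := by rw [p7] at h8; exact fun h => h8 (by rw [h, neg_zero])
  have n125 : det4 A Z₁ Z₂ Z₅ ≠ 0 := by rwa [p4] at h2
  have key :
      -(det4 A Z₁ Z₂ Z₄)*(det4 A Z₁ Z₃ Z₄)*(det4 A Z₂ Z₄ Z₅)*(det4 Z₁ Z₂ Z₃ Z₄)*(det4 Z₁ Z₂ Z₃ Z₅)*(det4 Z₁ Z₂ Z₄ Z₅)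
      + (det4 A Z₁ Z₂ Z₄)*(det4 A Z₁ Z₂ Z₅)*(det4 A Z₂ Z₄ Z₅)*(det4 Z₁ Z₂ Z₃ Z₄)^2*(det4 Z₁ Z₃ Z₄ Z₅)
      - (det4 A Z₁ Z₂ Z₃)*(det4 A Z₁ Z₂ Z₄)*(det4 A Z₁ Z₃ Z₄)*(det4 Z₁ Z₂ Z₄ Z₅)^2*(det4 Z₂ Z₃ Z₄ Z₅)
      = -(det4 A Z₁ Z₂ Z₅)*(det4 A Z₁ Z₄ Z₅)*(det4 A Z₂ Z₄ Z₅)*(det4 Z₁ Z₂ Z₃ Z₄)^3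
        - (det4 A Z₁ Z₂ Z₃)*(det4 A Z₁ Z₃ Z₄)*(det4 A Z₂ Z₃ Z₄)*(det4 Z₁ Z₂ Z₄ Z₅)^3 := by
    linear_combination
      (det4 A Z₁ Z₄ Z₅ * det4 A Z₂ Z₄ Z₅ * (det4 Z₁ Z₂ Z₃ Z₄)^2
        + det4 A Z₁ Z₂ Z₄ * det4 A Z₂ Z₄ Z₅ * det4 Z₁ Z₂ Z₃ Z₄ * det4 Z₁ Z₃ Z₄ Z₅) * L12
      + (det4 A Z₁ Z₂ Z₄ * det4 A Z₂ Z₄ Z₅ * det4 Z₁ Z₂ Z₃ Z₄ * det4 Z₁ Z₂ Z₃ Z₅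
        - det4 A Z₁ Z₂ Z₃ * det4 A Z₂ Z₄ Z₅ * det4 Z₁ Z₂ Z₃ Z₄ * det4 Z₁ Z₂ Z₄ Z₅) * L14
      + (det4 A Z₁ Z₂ Z₃ * det4 A Z₁ Z₃ Z₄ * (det4 Z₁ Z₂ Z₄ Z₅)^2) * L24
  have eL : det4 Z₅ Z₁ Z₂ Z₃ * det4 Z₄ Z₅ Z₁ Z₂ * det4 Z₁ Z₂ Z₃ Z₄ /
        (det4 A Z₁ Z₄ Z₅ * det4 A Z₅ Z₁ Z₂ * det4 A Z₁ Z₂ Z₃ * det4 A Z₂ Z₃ Z₄)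
      - (det4 Z₅ Z₁ Z₂ Z₄)^2 * det4 Z₂ Z₃ Z₄ Z₅ /
        (det4 A Z₁ Z₄ Z₅ * det4 A Z₅ Z₁ Z₂ * det4 A Z₂ Z₃ Z₄ * det4 A Z₂ Z₄ Z₅)
      + (det4 Z₁ Z₂ Z₃ Z₄)^2 * det4 Z₁ Z₃ Z₄ Z₅ /
        (det4 A Z₁ Z₃ Z₄ * det4 A Z₁ Z₄ Z₅ * det4 A Z₁ Z₂ Z₃ * det4 A Z₂ Z₃ Z₄)
      = (-(det4 A Z₁ Z₂ Z₄)*(det4 A Z₁ Z₃ Z₄)*(det4 A Z₂ Z₄ Z₅)*(det4 Z₁ Z₂ Z₃ Z₄)*(det4 Z₁ Z₂ Z₃ Z₅)*(det4 Z₁ Z₂ Z₄ Z₅)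
        + (det4 A Z₁ Z₂ Z₄)*(det4 A Z₁ Z₂ Z₅)*(det4 A Z₂ Z₄ Z₅)*(det4 Z₁ Z₂ Z₃ Z₄)^2*(det4 Z₁ Z₃ Z₄ Z₅)
        - (det4 A Z₁ Z₂ Z₃)*(det4 A Z₁ Z₂ Z₄)*(det4 A Z₁ Z₃ Z₄)*(det4 Z₁ Z₂ Z₄ Z₅)^2*(det4 Z₂ Z₃ Z₄ Z₅)) /
        (det4 A Z₁ Z₂ Z₃ * det4 A Z₁ Z₂ Z₄ * det4 A Z₁ Z₂ Z₅ * det4 A Z₁ Z₃ Z₄ *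
          det4 A Z₁ Z₄ Z₅ * det4 A Z₂ Z₃ Z₄ * det4 A Z₂ Z₄ Z₅) := by
    rw [p1, p2, p3, p4]
    field_simp
    ring
  have eR : tet A Z₂ Z₃ Z₄ (-Z₁) + tet A Z₂ Z₄ Z₅ (-Z₁)
      = (-(det4 A Z₁ Z₂ Z₅)*(det4 A Z₁ Z₄ Z₅)*(det4 A Z₂ Z₄ Z₅)*(det4 Z₁ Z₂ Z₃ Z₄)^3
        - (det4 A Z₁ Z₂ Z₃)*(det4 A Z₁ Z₃ Z₄)*(det4 A Z₂ Z₃ Z₄)*(det4 Z₁ Z₂ Z₄ Z₅)^3) /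
        (det4 A Z₁ Z₂ Z₃ * det4 A Z₁ Z₂ Z₄ * det4 A Z₁ Z₂ Z₅ * det4 A Z₁ Z₃ Z₄ *
          det4 A Z₁ Z₄ Z₅ * det4 A Z₂ Z₃ Z₄ * det4 A Z₂ Z₄ Z₅) := by
    rw [tet, tet, p5, p6, p7, p8, p9, p10, p11, p12]
    field_simp
    ring
  rw [eL, eR, key]
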